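/- Let g : ℝ → ℝ satisfy g(0) = 1, g(x) ≠ 1 for every x ≠ 0, and suppose g is bounded on some neighbourhood of 0. If K : ℝ → ℝ is not identically zero and satisfies the Goldie equation K(u+v) = g(v)·K(u) + K(v) for all u, v ∈ ℝ, then there exists ρ ≠ 0 such that g(x) = e^{−ρx} for all x ∈ ℝ, and there exists a constant c such that K(t) = c·(1 − e^{−ρt}) for all t ∈ ℝ. -/

import Mathlib

theorem goldie_equation_locally_bounded
    (g K : ℝ → ℝ) (hg0 : g 0 = 1)
    (hg1 : ∀ x : ℝ, x ≠ 0 → g x ≠ 1)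
    (hloc : ∃ U ∈ nhds (0 : ℝ), ∃ M : ℝ, ∀ x ∈ U, |g x| ≤ M)
    (hK : ∃ x : ℝ, K x ≠ 0)
    (hGoldie : ∀ u v : ℝ, K (u + v) = g v * K u + K v) :
    ∃ ρ : ℝ, ρ ≠ 0 ∧ (∀ x : ℝ, g x = Real.exp (-ρ * x)) ∧
      ∃ c : ℝ, ∀ t : ℝ, K t = c * (1 - Real.exp (-ρ * t)) := by
  -- K 0 = 0
  have hK0 : K 0 = 0 := by
    have := hGoldie 0 0
    rw [hg0] at this
    simp at this
    linarith
  obtain ⟨x0, hx0⟩ := hK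
  have hx0ne : x0 ≠ 0 := by rintro rfl; exact hx0 hK0
  have hgx0 : g x0 - 1 ≠ 0 := sub_ne_zero.mpr (hg1 x0 hx0ne)
  have hsym : ∀ u v : ℝ, (g v - 1) * K u = (g u - 1) * K v := by
    intro u v
    have h1 := hGoldie u v
    have h2 := hGoldie v u
    rw [add_comm v u] at h2
    nlinarith [h1, h2]
  set c' : ℝ := K x0 / (g x0 - 1) with hc'def
  have hKeq : ∀ v : ℝ, K v = c' * (g v - 1) := by
    intro v
    have h := hsym x0 v
    field_simp [hc'def]
    rw [hc'def, div_mul_eq_mul_div, eq_div_iff hgx0]; linarith [h]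
  have hc' : c' ≠ 0 := by
    intro h
    apply hx0
    rw [hKeq x0, h, zero_mul]
  have hmul : ∀ u v : ℝ, g (u + v) = g u * g v := by
    intro u v
    have h := hGoldie u v
    rw [hKeq (u + v), hKeq u, hKeq v] at h
    have h2 : c' * (g (u + v) - 1) = c' * (g u * g v - 1) := by linear_combination h
    have h3 := mul_left_cancel₀ hc' h2
    linarith [h3]
  have hgne : ∀ x : ℝ, g x ≠ 0 := by
    intro x hx
    have := hmul x (-x)
    rw [hx, zero_mul, add_neg_cancel, hg0] at this
    exact one_ne_zero this
  have hgpos : ∀ x : ℝ, 0 < g x := by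
    intro x
    have h := hmul (x / 2) (x / 2)
    rw [add_halves] at h
    have hp : 0 < g (x / 2) * g (x / 2) := mul_self_pos.mpr (hgne (x / 2))
    linarith [h, hp]
  -- additive log
  set h : ℝ → ℝ := fun x => Real.log (g x) with hhdef
  have hadd : ∀ u v : ℝ, h (u + v) = h u + h v := by
    intro u v
    simp only [hhdef, hmul u v, Real.log_mul (hgne u) (hgne v)]
  set f : ℝ →+ ℝ := AddMonoidHom.mk' h hadd with hfdef
  -- bound near 0
  obtain ⟨U, hU, M, hM⟩ := hloc
  obtain ⟨δ, hδ, hball⟩ := Metric.mem_nhds_iff.mp hU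
  have hM1 : 1 ≤ M := by
    have := hM 0 (hball (Metric.mem_ball_self hδ))
    rw [hg0] at this; simpa using this
  have hbound : ∀ x : ℝ, |x| < δ → |h x| ≤ Real.log M := by
    intro x hx
    have hx' : x ∈ Metric.ball (0 : ℝ) δ := by simpa [Real.dist_eq] using hx
    have hx'' : -x ∈ Metric.ball (0 : ℝ) δ := by
      simp [Real.dist_eq, abs_neg]; simpa [Real.dist_eq] using hx
    have h1 : g x ≤ M := le_trans (le_abs_self _) (hM x (hball hx'))
    have h2 : g (-x) ≤ M := le_trans (le_abs_self _) (hM (-x) (hball hx''))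
    have hle : h x ≤ Real.log M :=
      Real.log_le_log (hgpos x) h1
    have hinv : g x * g (-x) = 1 := by
      rw [← hmul]; simp [hg0]
    have hneg : h x = -h (-x) := by
      have := hadd x (-x)
      simp [hhdef, hg0] at this
      simp only [hhdef]; linarith [this]
    have hge : -Real.log M ≤ h x := by
      rw [hneg, neg_le_neg_iff]
      exact Real.log_le_log (hgpos (-x)) h2
    exact abs_le.mpr ⟨hge, hle⟩
  -- continuity at 0
  have hcont0 : Filter.Tendsto h (nhds 0) (nhds 0) := by
    rw [Metric.tendsto_nhds_nhds]
    intro ε hε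
    obtain ⟨n, hn⟩ := exists_nat_gt (Real.log M / ε)
    have hn0 : 0 < (n : ℝ) := lt_of_le_of_lt (div_nonneg (Real.log_nonneg hM1) hε.le) hn
    refine ⟨δ / n, div_pos hδ hn0, fun {x} hx => ?_⟩
    have hnx : |(n : ℝ) * x| < δ := by
      rw [abs_mul, abs_of_pos hn0]
      calc (n : ℝ) * |x| < (n : ℝ) * (δ / n) := by
            apply mul_lt_mul_of_pos_left _ hn0
            simpa [Real.dist_eq] using hx
        _ = δ := by field_simp
    have hb := hbound ((n : ℝ) * x) hnx
    have hfn : h ((n : ℝ) * x) = (n : ℝ) * h x := by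
      have := map_nsmul f n x
      simpa [hfdef, nsmul_eq_mul] using this
    rw [hfn, abs_mul, abs_of_pos hn0] at hb
    have hlt : Real.log M < n * ε := by
      rw [div_lt_iff₀ hε] at hn; linarith
    have : (n : ℝ) * |h x| < (n : ℝ) * ε := lt_of_le_of_lt hb hlt
    have habs : |h x| < ε := by
      have := (mul_lt_mul_iff_right₀ hn0).mp this
      exact this
    simpa [Real.dist_eq] using habs
  have hh0 : h 0 = 0 := by simp [hhdef, hg0]
  have hcont : Continuous h := by
    rw [continuous_iff_continuousAt]
    intro y
    have t1 : Filter.Tendsto (fun x : ℝ => x - y) (nhds y) (nhds 0) := by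
      have := Filter.Tendsto.sub_const (Filter.tendsto_id : Filter.Tendsto id (nhds y) (nhds y)) y
      simpa using this
    have t2 : Filter.Tendsto (fun x => h (x - y) + h y) (nhds y) (nhds (h y)) := by
      have := (hcont0.comp t1).add_const (h y)
      simpa using this
    have hfun : (fun x => h (x - y) + h y) = h := by
      funext x
      rw [← hadd (x - y) y, sub_add_cancel]
    have t3 : ContinuousAt (fun x => h (x - y) + h y) y := by
      simpa [ContinuousAt, hh0] using t2
    exact hfun ▸ t3
  have hcontf : Continuous f := hcont
  have hlin : ∀ x : ℝ, h x = x * h 1 := by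
    intro x
    have := map_real_smul f hcontf x 1
    simpa [hfdef, smul_eq_mul] using this
  set a : ℝ := h 1 with hadef
  have hgexp : ∀ x : ℝ, g x = Real.exp (a * x) := by
    intro x
    have : Real.exp (h x) = g x := Real.exp_log (hgpos x)
    rw [← this, hlin x]; ring_nf
  have hane : a ≠ 0 := by
    intro h0
    apply hg1 1 one_ne_zero
    rw [hgexp 1, h0]; simp
  refine ⟨-a, neg_ne_zero.mpr hane, fun x => by rw [hgexp x]; ring_nf, -c', fun t => ?_⟩
  rw [hKeq t, hgexp t]
  ring_nf
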